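/- Fix reals α, β, η, q with αq > 0, 2β + 2 − α(2η+1)q > 0, 1 + β − αηq > 0, and 1 − β + αηq > 0. Then ψ(q) := α(1 + β + (1+2η)αηq) / ( q(1 − β + αηq)(2 + 2β − (1+2η)αq) ) is positive and, as a function of q on the region where the four inequalities hold, satisfies ψ''(q) > 0 (it is strictly convex there). -/

import Mathlib

noncomputable def psi1aux (α β η x : ℝ) : ℝ :=
  (α * ((1 + 2 * η) * α * η * 1) * (x * (1 - β + α * η * x) * (2 + 2 * β - (1 + 2 * η) * α * x)) -
      α * (1 + β + (1 + 2 * η) * α * η * x) *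
        ((1 * (1 - β + α * η * x) + x * (α * η * 1)) * (2 + 2 * β - (1 + 2 * η) * α * x) +
          x * (1 - β + α * η * x) * -((1 + 2 * η) * α * 1))) /
    (x * (1 - β + α * η * x) * (2 + 2 * β - (1 + 2 * η) * α * x)) ^ 2

set_option maxHeartbeats 2000000 in
theorem stmt_4 (α β η q : ℝ)
    (h1 : 0 < α * q) (h2 : 0 < 2 * β + 2 - α * (2 * η + 1) * q)
    (h3 : 0 < 1 + β - α * η * q) (h4 : 0 < 1 - β + α * η * q) :
    let ψ : ℝ → ℝ := fun q =>
      α * (1 + β + (1 + 2 * η) * α * η * q) /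
        (q * (1 - β + α * η * q) * (2 + 2 * β - (1 + 2 * η) * α * q))
    0 < ψ q ∧ 0 < iteratedDeriv 2 ψ q := by
  intro ψ
  have hq0 : q ≠ 0 := by rintro rfl; simp at h1
  have hv2 : 0 < 2 + 2 * β - (1 + 2 * η) * α * q := by nlinarith [h2]
  have hDq : q * (1 - β + α * η * q) * (2 + 2 * β - (1 + 2 * η) * α * q) ≠ 0 :=
    mul_ne_zero (mul_ne_zero hq0 (ne_of_gt h4)) (ne_of_gt hv2)
  -- first-order derivative facts, for every x
  have hid : ∀ x : ℝ, HasDerivAt (fun y : ℝ => y) 1 x := fun x => hasDerivAt_id x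
  have hu : ∀ x : ℝ, HasDerivAt (fun y : ℝ => 1 - β + α * η * y) (α * η * 1) x := fun x =>
    (((hid x).const_mul (α * η)).const_add (1 - β))
  have hv : ∀ x : ℝ, HasDerivAt (fun y : ℝ => 2 + 2 * β - (1 + 2 * η) * α * y)
      (-((1 + 2 * η) * α * 1)) x := fun x =>
    (((hid x).const_mul ((1 + 2 * η) * α)).const_sub (2 + 2 * β))
  have hN : ∀ x : ℝ, HasDerivAt (fun y : ℝ => α * (1 + β + (1 + 2 * η) * α * η * y))
      (α * ((1 + 2 * η) * α * η * 1)) x := fun x =>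
    ((((hid x).const_mul ((1 + 2 * η) * α * η)).const_add (1 + β)).const_mul α)
  have hxu : ∀ x : ℝ, HasDerivAt (fun y : ℝ => y * (1 - β + α * η * y))
      (1 * (1 - β + α * η * x) + x * (α * η * 1)) x := fun x => (hid x).mul (hu x)
  have hD : ∀ x : ℝ, HasDerivAt
      (fun y : ℝ => y * (1 - β + α * η * y) * (2 + 2 * β - (1 + 2 * η) * α * y))
      ((1 * (1 - β + α * η * x) + x * (α * η * 1)) * (2 + 2 * β - (1 + 2 * η) * α * x) +
        x * (1 - β + α * η * x) * -((1 + 2 * η) * α * 1)) x := fun x => (hxu x).mul (hv x)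
  have hψat : ∀ x : ℝ,
      x * (1 - β + α * η * x) * (2 + 2 * β - (1 + 2 * η) * α * x) ≠ 0 →
      HasDerivAt (fun y : ℝ => α * (1 + β + (1 + 2 * η) * α * η * y) /
          (y * (1 - β + α * η * y) * (2 + 2 * β - (1 + 2 * η) * α * y)))
        (psi1aux α β η x) x := by
    intro x hx
    have h := (hN x).div (hD x) hx
    exact h
  constructor
  · -- positivity of ψ q
    show 0 < α * (1 + β + (1 + 2 * η) * α * η * q) /
        (q * (1 - β + α * η * q) * (2 + 2 * β - (1 + 2 * η) * α * q))
    have hnum : 0 < α * (1 + β + (1 + 2 * η) * α * η * q) * q := by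
      nlinarith [mul_pos h1 hv2, sq_nonneg ((1 + 2 * η) * α * q)]
    have hden : 0 < q * q * ((1 - β + α * η * q) * (2 + 2 * β - (1 + 2 * η) * α * q)) :=
      mul_pos (mul_self_pos.mpr hq0) (mul_pos h4 hv2)
    rw [show α * (1 + β + (1 + 2 * η) * α * η * q) /
        (q * (1 - β + α * η * q) * (2 + 2 * β - (1 + 2 * η) * α * q)) =
        α * (1 + β + (1 + 2 * η) * α * η * q) * q /
        (q * q * ((1 - β + α * η * q) * (2 + 2 * β - (1 + 2 * η) * α * q))) from by
      rw [div_eq_div_iff hDq (ne_of_gt hden)]; ring]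
    exact div_pos hnum hden
  · -- convexity: second derivative
    show 0 < iteratedDeriv 2 (fun y : ℝ => α * (1 + β + (1 + 2 * η) * α * η * y) /
        (y * (1 - β + α * η * y) * (2 + 2 * β - (1 + 2 * η) * α * y))) q
    -- second derivative of psi1aux at q
    have hw : HasDerivAt (fun y : ℝ => 1 * (1 - β + α * η * y) + y * (α * η * 1))
        (1 * (α * η * 1) + 1 * (α * η * 1)) q :=
      ((hu q).const_mul 1).add ((hid q).mul_const (α * η * 1))
    have hdD : HasDerivAt (fun y : ℝ =>
        (1 * (1 - β + α * η * y) + y * (α * η * 1)) * (2 + 2 * β - (1 + 2 * η) * α * y) +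
          y * (1 - β + α * η * y) * -((1 + 2 * η) * α * 1))
        (((1 * (α * η * 1) + 1 * (α * η * 1)) * (2 + 2 * β - (1 + 2 * η) * α * q) +
            (1 * (1 - β + α * η * q) + q * (α * η * 1)) * -((1 + 2 * η) * α * 1)) +
          (1 * (1 - β + α * η * q) + q * (α * η * 1)) * -((1 + 2 * η) * α * 1)) q :=
      (hw.mul (hv q)).add ((hxu q).mul_const (-((1 + 2 * η) * α * 1)))
    have hPnum := ((hD q).const_mul (α * ((1 + 2 * η) * α * η * 1))).sub ((hN q).mul hdD)
    have hDen := (hD q).pow 2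
    have hψ1' := hPnum.div hDen (pow_ne_zero 2 hDq)
    -- identify the iterated derivative
    have hopen : IsOpen {x : ℝ |
        x * (1 - β + α * η * x) * (2 + 2 * β - (1 + 2 * η) * α * x) ≠ 0} := by
      have hc : Continuous fun x : ℝ =>
          x * (1 - β + α * η * x) * (2 + 2 * β - (1 + 2 * η) * α * x) := by continuity
      exact isOpen_ne.preimage hc
    have hev : (deriv (fun y : ℝ => α * (1 + β + (1 + 2 * η) * α * η * y) /
        (y * (1 - β + α * η * y) * (2 + 2 * β - (1 + 2 * η) * α * y)))) =ᶠ[nhds q]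
        psi1aux α β η := by
      filter_upwards [hopen.mem_nhds hDq] with x hx
      exact (hψat x hx).deriv
    rw [iteratedDeriv_succ, iteratedDeriv_one, hev.deriv_eq]
    unfold psi1aux
    erw [hψ1'.deriv]
    simp only [Pi.sub_apply, Pi.mul_apply, Pi.pow_apply]
    -- now positivity of the explicit expression
    apply div_pos
    · have hT1 : 0 ≤ q ^ 4 * ((1 - β + α * η * q) * (2 + 2 * β - (1 + 2 * η) * α * q)) *
          ((1 + 2 * η) * α) ^ 2 *
          ((α * η * (2 + 2 * β - (1 + 2 * η) * α * q)) ^ 2 -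
            (α * η * (2 + 2 * β - (1 + 2 * η) * α * q)) * ((1 + 2 * η) * α * (1 - β + α * η * q)) +
            ((1 + 2 * η) * α * (1 - β + α * η * q)) ^ 2) := by
        have hx : 0 ≤ (α * η * (2 + 2 * β - (1 + 2 * η) * α * q)) ^ 2 -
            (α * η * (2 + 2 * β - (1 + 2 * η) * α * q)) * ((1 + 2 * η) * α * (1 - β + α * η * q)) +
            ((1 + 2 * η) * α * (1 - β + α * η * q)) ^ 2 := by
          linarith [sq_nonneg (α * η * (2 + 2 * β - (1 + 2 * η) * α * q) -
            (1 + 2 * η) * α * (1 - β + α * η * q)),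
            sq_nonneg (α * η * (2 + 2 * β - (1 + 2 * η) * α * q)),
            sq_nonneg ((1 + 2 * η) * α * (1 - β + α * η * q))]
        have hq4 : (0:ℝ) ≤ q ^ 4 := by positivity
        exact mul_nonneg (mul_nonneg (mul_nonneg hq4 (mul_pos h4 hv2).le)
          (sq_nonneg _)) hx
      have hT2 : 0 < α * q * (1 - β + α * η * q) * (2 + 2 * β - (1 + 2 * η) * α * q) ^ 4 *
          ((1 - β + α * η * q) ^ 2 + α * η * q * (1 - β + α * η * q) + (α * η * q) ^ 2) := by
        have hQ : 0 < (1 - β + α * η * q) ^ 2 + α * η * q * (1 - β + α * η * q) +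
            (α * η * q) ^ 2 := by
          linarith [sq_nonneg (1 - β + α * η * q + α * η * q), sq_nonneg (α * η * q),
            mul_pos h4 h4]
        exact mul_pos (mul_pos (mul_pos h1 h4) (pow_pos hv2 4)) hQ
      push_cast
      linarith [hT1, hT2]
    · exact pow_pos (pow_two_pos_of_ne_zero hDq) 2
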